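/- Let A be a unital algebra over a commutative ring T, J an ideal with J² = 0, κ : A/J → A a T-linear section of π : A → A/J, and h : A/J → J a T-linear map such that κ(xy) − κ(x)κ(y) = x·h(y) − h(xy) + h(x)·y for all x, y. Then p = κ + h : A/J → A is a T-algebra homomorphism splitting π, i.e., π ∘ p = id and p(xy) = p(x)p(y). -/

import Mathlib

universe u v w

/-- let `J` be a two-sided ideal of `A` with `J² = 0`,
`π : A → Q` a surjective algebra map with kernel `J`, `κ : Q → A` a `T`-linear
section of `π`, and `h : Q → J` a `T`-linear map such that
`κ(xy) − κ(x)κ(y) = x·h(y) − h(xy) + h(x)·y` (actions via the lift `κ`).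
Then `p = κ + h` is a `T`-algebra homomorphism splitting `π`:
`π ∘ p = id`, `p(xy) = p(x)p(y)` and `p 1 = 1`. -/
theorem section_plus_coboundary_is_algebra_hom
    {T : Type u} {A : Type v} {Q : Type w}
    [CommRing T] [Ring A] [Algebra T A] [Ring Q] [Algebra T Q]
    (J : Submodule T A)
    (hJl : ∀ a : A, ∀ x ∈ J, a * x ∈ J) (hJr : ∀ a : A, ∀ x ∈ J, x * a ∈ J)
    (hJ2 : ∀ x ∈ J, ∀ y ∈ J, x * y = 0)
    (π : A →ₐ[T] Q) (hπ : Function.Surjective π)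
    (hker : ∀ a : A, π a = 0 ↔ a ∈ J)
    (κ : Q →ₗ[T] A) (hκ : ∀ x : Q, π (κ x) = x)
    (h : Q →ₗ[T] A) (hhJ : ∀ x : Q, h x ∈ J)
    (hcob : ∀ x y : Q,
      κ (x * y) - κ x * κ y = κ x * h y - h (x * y) + h x * κ y) :
    (∀ x : Q, π ((κ + h) x) = x) ∧
      (∀ x y : Q, (κ + h) (x * y) = (κ + h) x * (κ + h) y) ∧
      (κ + h) 1 = 1 := by
  have hsec : ∀ x : Q, π ((κ + h) x) = x := by
    intro x
    simp only [LinearMap.add_apply, map_add, hκ]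
    rw [(hker (h x)).mpr (hhJ x), add_zero]
  have hmul : ∀ x y : Q, (κ + h) (x * y) = (κ + h) x * (κ + h) y := by
    intro x y
    have hzero : h x * h y = 0 := hJ2 _ (hhJ x) _ (hhJ y)
    have key : κ (x * y) = κ x * h y - h (x * y) + h x * κ y + κ x * κ y :=
      eq_add_of_sub_eq (hcob x y)
    simp only [LinearMap.add_apply]
    rw [key, add_mul, mul_add, mul_add, hzero]
    abel
  refine ⟨hsec, hmul, ?_⟩
  set e : A := (κ + h) 1 with he
  have hidem : e * e = e := by
    have := hmul 1 1
    rw [mul_one] at this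
    exact this.symm
  have hmem : e - 1 ∈ J := by
    rw [← hker]
    rw [map_sub, map_one, he, hsec 1, sub_self]
  have hsq : (e - 1) * (e - 1) = 0 := hJ2 _ hmem _ hmem
  have h2 : e * e - e - e + 1 = 0 := by rw [← hsq]; noncomm_ring
  rw [hidem] at h2
  have h3 : (1 : A) - e = 0 := by rw [← h2]; abel
  have h4 : e = 1 := by
    have := sub_eq_zero.mp h3
    exact this.symm
  exact h4
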